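/- Let θ ∈ ℝ and (m̂_k)_{k≥0} an absolutely summable real sequence. Define u_k^{(p)} = ∑_{j=0}^{k−1} m̂_j · sin((k − j − 1)θ) and S = ∑_{k=0}^{∞} m̂_k e^{−i(k+1)θ}. Then u_k^{(p)} − |S|·sin(kθ + Arg(S)) → 0 as k → ∞. -/

import Mathlib

open Complex in
theorem stmt_18 (θ : ℝ) (m : ℕ → ℝ) (hm : Summable fun k => |m k|) :
    Filter.Tendsto
      (fun k : ℕ =>
        (∑ j ∈ Finset.range k, m j * Real.sin (((k : ℝ) - j - 1) * θ)) -
          ‖∑' k : ℕ, (m k : ℂ) * Complex.exp (-(((k : ℝ) + 1) * θ) * Complex.I)‖ *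
            Real.sin ((k : ℝ) * θ +
              Complex.arg
                (∑' k : ℕ, (m k : ℂ) * Complex.exp (-(((k : ℝ) + 1) * θ) * Complex.I))))
      Filter.atTop (nhds 0) := by
  set a : ℕ → ℂ := fun k => (m k : ℂ) * Complex.exp (-(((k : ℝ) + 1) * θ) * Complex.I) with ha_def
  have ha : Summable a := by
    apply Summable.of_norm
    have : ∀ k, ‖a k‖ = |m k| := by
      intro k
      simp [ha_def, Complex.norm_exp]
    simpa [this] using hm
  set S : ℂ := ∑' k, a k with hS_def
  have htend : Filter.Tendsto (fun k => ∑ j ∈ Finset.range k, a j) Filter.atTop (nhds S) :=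
    ha.hasSum.tendsto_sum_nat
  have hdiff : Filter.Tendsto (fun k => ‖(∑ j ∈ Finset.range k, a j) - S‖) Filter.atTop (nhds 0) := by
    have h1 : Filter.Tendsto (fun k => (∑ j ∈ Finset.range k, a j) - S) Filter.atTop (nhds (S - S)) :=
      htend.sub tendsto_const_nhds
    have := h1.norm
    simpa using this
  have hS : ∀ x : ℝ, (Complex.exp ((x : ℂ) * Complex.I) * S).im
      = ‖S‖ * Real.sin (x + Complex.arg S) := by
    intro x
    conv_lhs => rw [← Complex.norm_mul_exp_arg_mul_I S]
    rw [show Complex.exp ((x : ℂ) * Complex.I) *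
        ((‖S‖ : ℂ) * Complex.exp ((Complex.arg S : ℂ) * Complex.I))
        = (‖S‖ : ℂ) * Complex.exp (((x + Complex.arg S : ℝ) : ℂ) * Complex.I) by
      rw [Complex.ofReal_add, add_mul, Complex.exp_add]; ring]
    rw [Complex.im_ofReal_mul, Complex.exp_ofReal_mul_I_im]
  have key : ∀ k : ℕ,
      (∑ j ∈ Finset.range k, m j * Real.sin (((k : ℝ) - j - 1) * θ)) -
        ‖S‖ * Real.sin ((k : ℝ) * θ + Complex.arg S)
      = (Complex.exp ((((k : ℝ) * θ : ℝ) : ℂ) * Complex.I) * ((∑ j ∈ Finset.range k, a j) - S)).im := by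
    intro k
    rw [mul_sub, Complex.sub_im, Finset.mul_sum, Complex.im_sum]
    congr 1
    · apply Finset.sum_congr rfl
      intro j hj
      rw [ha_def]
      simp only
      rw [mul_left_comm, ← Complex.exp_add]
      have harg : ((((k : ℝ) * θ : ℝ)) : ℂ) * Complex.I + -(((j : ℝ) + 1) * θ) * Complex.I
          = ((((k : ℝ) - j - 1) * θ : ℝ) : ℂ) * Complex.I := by
        push_cast
        ring
      rw [harg, Complex.im_ofReal_mul, Complex.exp_ofReal_mul_I_im]
    · exact (hS ((k : ℝ) * θ)).symm
  refine squeeze_zero_norm (fun k => ?_) hdiff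
  rw [key k]
  calc ‖(Complex.exp ((((k : ℝ) * θ : ℝ) : ℂ) * Complex.I) * ((∑ j ∈ Finset.range k, a j) - S)).im‖
      ≤ ‖Complex.exp ((((k : ℝ) * θ : ℝ) : ℂ) * Complex.I) * ((∑ j ∈ Finset.range k, a j) - S)‖ :=
        Complex.abs_im_le_norm _
    _ = ‖(∑ j ∈ Finset.range k, a j) - S‖ := by
        rw [norm_mul]
        simp [Complex.norm_exp]
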